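/- For k ≥ 3, one has ∑_{l=1}^N r_{2,k}(l)² = O(N^{2/k + ε}) for every ε > 0; equivalently, the number of quadruples (x₁,x₂,y₁,y₂) of positive integers ≤ X with x₁^k + x₂^k = y₁^k + y₂^k is O(X^{2+ε}). -/

import Mathlib

open scoped BigOperators

/-- `r_{s,k}(l)`: the number of ordered `s`-tuples of positive integers whose `k`-th powers
sum to `l`. -/
noncomputable def numRep (s k l : ℕ) : ℕ :=
  Nat.card {v : Fin s → ℕ // (∀ i, 1 ≤ v i) ∧ ∑ i, (v i) ^ k = l}

open Finset in

lemma divisor_bound : ∀ ε : ℝ, 0 < ε → ∃ C : ℝ, 1 ≤ C ∧ ∀ n : ℕ, 1 ≤ n →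
    ((n.divisors.card : ℝ)) ≤ C * (n : ℝ) ^ ε := by
  intro ε hε
  set δ : ℝ := ε * Real.log 2 with hδdef
  have hδ : 0 < δ := mul_pos hε (Real.log_pos (by norm_num))
  set B : ℝ := 1 + 1 / δ with hBdef
  have hB1 : 1 ≤ B := le_add_of_nonneg_right (by positivity)
  have hB0 : 0 ≤ B := by linarith
  set P : ℕ := ⌈(2:ℝ) ^ (1/ε)⌉₊ + 1 with hPdef
  refine ⟨B ^ P, one_le_pow₀ hB1, ?_⟩
  intro n hn
  have hn0 : n ≠ 0 := by omega
  set S := n.primeFactors with hS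
  have key : ∀ p ∈ S,
      ((n.factorization p + 1 : ℕ) : ℝ) ≤
        (if p < P then B else 1) * ((p : ℝ) ^ ((n.factorization p : ℝ) * ε)) := by
    intro p hp
    have hpp : p.Prime := Nat.prime_of_mem_primeFactors hp
    have hp2 : (2:ℝ) ≤ (p:ℝ) := by exact_mod_cast hpp.two_le
    set a : ℕ := n.factorization p with ha
    by_cases hsmall : p < P
    · simp only [hsmall, if_true]
      have h1 : (2:ℝ) ^ ((a:ℝ) * ε) ≤ (p:ℝ) ^ ((a:ℝ) * ε) :=
        Real.rpow_le_rpow (by norm_num) hp2 (by positivity)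
      have h2 : (2:ℝ) ^ ((a:ℝ) * ε) = Real.exp ((a:ℝ) * δ) := by
        rw [Real.rpow_def_of_pos (by norm_num : (0:ℝ) < 2), hδdef]
        congr 1
        ring
      have h3 : (a:ℝ) * δ + 1 ≤ Real.exp ((a:ℝ) * δ) := Real.add_one_le_exp _
      have h4 : (1:ℝ) ≤ Real.exp ((a:ℝ) * δ) := Real.one_le_exp (by positivity)
      have h5 : ((a:ℝ) + 1) ≤ B * Real.exp ((a:ℝ) * δ) := by
        have ha' : (a:ℝ) ≤ Real.exp ((a:ℝ)*δ) / δ := by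
          rw [le_div_iff₀ hδ]; nlinarith
        calc (a:ℝ) + 1 ≤ Real.exp ((a:ℝ)*δ) / δ + Real.exp ((a:ℝ)*δ) := by linarith
          _ = (1 + 1/δ) * Real.exp ((a:ℝ)*δ) := by field_simp; ring
      calc ((a + 1 : ℕ) : ℝ) = (a:ℝ) + 1 := by push_cast; ring
        _ ≤ B * Real.exp ((a:ℝ) * δ) := h5
        _ = B * (2:ℝ) ^ ((a:ℝ) * ε) := by rw [h2]
        _ ≤ B * (p:ℝ) ^ ((a:ℝ) * ε) := mul_le_mul_of_nonneg_left h1 hB0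
    · simp only [hsmall, if_false, one_mul]
      push_neg at hsmall
      have hPle : (2:ℝ) ^ (1/ε) ≤ (p:ℝ) := by
        calc (2:ℝ) ^ (1/ε) ≤ (⌈(2:ℝ) ^ (1/ε)⌉₊ : ℝ) := Nat.le_ceil _
          _ ≤ (p:ℝ) := by exact_mod_cast Nat.le_of_succ_le hsmall
      have hpe : (2:ℝ) ≤ (p:ℝ) ^ ε := by
        have h := Real.rpow_le_rpow (by positivity) hPle (le_of_lt hε)
        rwa [← Real.rpow_mul (by norm_num : (0:ℝ) ≤ 2), one_div,
          inv_mul_cancel₀ (ne_of_gt hε), Real.rpow_one] at h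
      have hae : (p:ℝ) ^ ((a:ℝ) * ε) = ((p:ℝ) ^ ε) ^ a := by
        rw [mul_comm, Real.rpow_mul (by positivity), Real.rpow_natCast]
      rw [hae]
      calc ((a + 1 : ℕ) : ℝ) ≤ ((2^a : ℕ) : ℝ) := by exact_mod_cast Nat.lt_two_pow_self (n := a)
        _ = (2:ℝ)^a := by push_cast; ring
        _ ≤ ((p:ℝ) ^ ε) ^ a := pow_le_pow_left₀ (by norm_num) hpe a
  have hd : ((n.divisors.card : ℕ) : ℝ) = ∏ p ∈ S, ((n.factorization p + 1 : ℕ) : ℝ) := by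
    rw [Nat.card_divisors hn0]
    push_cast
    rfl
  have step1 : ((n.divisors.card : ℕ) : ℝ) ≤
      ∏ p ∈ S, (if p < P then B else 1) * ((p : ℝ) ^ ((n.factorization p : ℝ) * ε)) := by
    rw [hd]
    exact Finset.prod_le_prod (fun p _ => by positivity) key
  have step2 : ∏ p ∈ S, (if p < P then B else 1) * ((p : ℝ) ^ ((n.factorization p : ℝ) * ε))
      = (∏ p ∈ S, (if p < P then B else 1)) * ∏ p ∈ S, (p : ℝ) ^ ((n.factorization p : ℝ) * ε) :=
    Finset.prod_mul_distrib
  have step3 : (∏ p ∈ S, (if p < P then B else (1:ℝ))) ≤ B ^ P := by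
    rw [← Finset.prod_filter_mul_prod_filter_not S (fun p => p < P)]
    have e1 : ∏ p ∈ S.filter (fun p => p < P), (if p < P then B else (1:ℝ))
        = B ^ (S.filter (fun p => p < P)).card := by
      have h : ∀ p ∈ S.filter (fun p => p < P), (if p < P then B else (1:ℝ)) = B :=
        fun p hp => if_pos (Finset.mem_filter.mp hp).2
      rw [Finset.prod_congr rfl h, Finset.prod_const]
    have e2 : ∏ p ∈ S.filter (fun p => ¬ p < P), (if p < P then B else (1:ℝ)) = 1 := by
      have h : ∀ p ∈ S.filter (fun p => ¬ p < P), (if p < P then B else (1:ℝ)) = 1 :=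
        fun p hp => if_neg (Finset.mem_filter.mp hp).2
      rw [Finset.prod_congr rfl h, Finset.prod_const, one_pow]
    rw [e1, e2, mul_one]
    apply pow_le_pow_right₀ hB1
    calc (S.filter (fun p => p < P)).card ≤ (Finset.range P).card := by
          apply Finset.card_le_card
          intro p hp
          simp only [Finset.mem_filter] at hp
          exact Finset.mem_range.mpr hp.2
      _ = P := Finset.card_range P
  have step4 : ∏ p ∈ S, (p : ℝ) ^ ((n.factorization p : ℝ) * ε) = (n : ℝ) ^ ε := by
    have hn' : (n:ℝ) = ∏ p ∈ S, ((p:ℝ) ^ (n.factorization p : ℕ)) := by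
      conv_lhs => rw [← Nat.factorization_prod_pow_eq_self hn0]
      rw [Finsupp.prod]
      push_cast
      rfl
    rw [hn', ← Real.finset_prod_rpow S _ (fun p _ => by positivity) ε]
    apply Finset.prod_congr rfl
    intro p _
    rw [← Real.rpow_natCast (p:ℝ) (n.factorization p), ← Real.rpow_mul (by positivity)]
  calc ((n.divisors.card : ℕ) : ℝ)
      ≤ (∏ p ∈ S, (if p < P then B else 1)) * ∏ p ∈ S, (p : ℝ) ^ ((n.factorization p : ℝ) * ε) := by
        rw [← step2]; exact step1
    _ ≤ B ^ P * (n : ℝ) ^ ε := by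
        rw [step4]
        exact mul_le_mul_of_nonneg_right step3 (Real.rpow_nonneg (by positivity) ε)


lemma key_convex (k u v t : ℕ) (hk : 2 ≤ k) (ht : 1 ≤ t) (huv : u < v) :
    (u + t) ^ k + v ^ k < (v + t) ^ k + u ^ k := by
  have h1 : ∀ w : ℕ, (w + t) ^ k = (∑ i ∈ Finset.range k, w ^ i * t ^ (k - i) * (k.choose i)) + w ^ k := by
    intro w
    rw [add_pow, Finset.sum_range_succ]
    simp
  rw [h1 u, h1 v]
  have h2 : ∑ i ∈ Finset.range k, u ^ i * t ^ (k - i) * (k.choose i)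
      < ∑ i ∈ Finset.range k, v ^ i * t ^ (k - i) * (k.choose i) := by
    apply Finset.sum_lt_sum
    · intro i _
      exact Nat.mul_le_mul_right _ (Nat.mul_le_mul_right _ (Nat.pow_le_pow_left (le_of_lt huv) i))
    · refine ⟨1, Finset.mem_range.mpr (by omega), ?_⟩
      simp only [pow_one]
      have hchoose : 0 < k.choose 1 := by
        rw [Nat.choose_one_right]; omega
      have htp : 0 < t ^ (k - 1) := Nat.pow_pos (by omega)
      exact Nat.mul_lt_mul_of_lt_of_le (Nat.mul_lt_mul_of_lt_of_le huv le_rfl htp) le_rfl hchoose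
  omega

lemma sub_inj (k : ℕ) (hk : 2 ≤ k) {x y x' y' m : ℕ} (hxy : y < x) (hxy' : y' < x')
    (hm : x ^ k - y ^ k = m) (hm' : x' ^ k - y' ^ k = m) (hd : x - y = x' - y') :
    x = x' ∧ y = y' := by
  have hy : y ^ k ≤ x ^ k := Nat.pow_le_pow_left (le_of_lt hxy) k
  have hy' : y' ^ k ≤ x' ^ k := Nat.pow_le_pow_left (le_of_lt hxy') k
  have e1 : x ^ k = y ^ k + m := by omega
  have e2 : x' ^ k = y' ^ k + m := by omega
  have hxx : x = x' := by
    rcases lt_trichotomy x x' with h | h | h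
    · exfalso
      have hyy : y < y' := by omega
      have := key_convex k y y' (x - y) hk (by omega) hyy
      rw [show y + (x - y) = x by omega, show y' + (x - y) = x' by omega] at this
      omega
    · exact h
    · exfalso
      have hyy : y' < y := by omega
      have := key_convex k y' y (x - y) hk (by omega) hyy
      rw [show y' + (x - y) = x' by omega, show y + (x - y) = x by omega] at this
      omega
  exact ⟨hxx, by omega⟩

/-- For `k ≥ 3`, `∑_{l=1}^N r_{2,k}(l)² = O(N^{2/k+ε})` for every `ε > 0`. -/
theorem stmt14 (k : ℕ) (hk : 3 ≤ k) :
    ∀ ε : ℝ, 0 < ε → ∃ C > 0, ∀ N : ℕ, 1 ≤ N →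
      ∑ l ∈ Finset.Icc 1 N, (numRep 2 k l : ℝ) ^ 2 ≤ C * (N : ℝ) ^ ((2 : ℝ) / k + ε) := by
  intro ε hε
  obtain ⟨Cd, hCd1, hCd⟩ := divisor_bound ε hε
  have hCd0 : (0:ℝ) ≤ Cd := by linarith
  refine ⟨1 + 2 * Cd, by linarith, ?_⟩
  intro N hN
  have hk0 : k ≠ 0 := by omega
  have hk1 : 1 ≤ k := by omega
  have hkR : ((k:ℝ)) ≠ 0 := by positivity
  have hNR : (0:ℝ) ≤ (N:ℝ) := by positivity
  have hN1 : (1:ℝ) ≤ (N:ℝ) := by exact_mod_cast hN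
  set X : ℕ := ⌊(N:ℝ) ^ ((k:ℝ)⁻¹)⌋₊ with hXdef
  have hXle : (X:ℝ) ≤ (N:ℝ) ^ ((k:ℝ)⁻¹) := Nat.floor_le (by positivity)
  have hroot : ∀ n : ℕ, n ^ k ≤ N → n ≤ X := by
    intro n hn
    apply Nat.le_floor
    have h1 : ((n:ℝ)) ^ (k:ℕ) ≤ (N:ℝ) := by exact_mod_cast hn
    have h2 : (((n:ℝ)) ^ (k:ℕ)) ^ ((k:ℝ)⁻¹) ≤ (N:ℝ) ^ ((k:ℝ)⁻¹) :=
      Real.rpow_le_rpow (by positivity) h1 (by positivity)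
    rwa [← Real.rpow_natCast (n:ℝ) k, ← Real.rpow_mul (by positivity),
      mul_inv_cancel₀ hkR, Real.rpow_one] at h2
  have hXk : X ^ k ≤ N := by
    have h2 : ((X:ℝ)) ^ (k:ℕ) ≤ ((N:ℝ) ^ ((k:ℝ)⁻¹)) ^ (k:ℕ) :=
      pow_le_pow_left₀ (by positivity) hXle k
    rw [← Real.rpow_natCast ((N:ℝ) ^ ((k:ℝ)⁻¹)) k, ← Real.rpow_mul hNR,
      inv_mul_cancel₀ hkR, Real.rpow_one] at h2
    exact_mod_cast h2
  set G : Finset (ℕ × ℕ) := Finset.Icc 1 X ×ˢ Finset.Icc 1 X with hGdef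
  have hGcard : G.card = X * X := by
    simp [hGdef, Nat.card_Icc]
  have hGmem : ∀ p : ℕ × ℕ, p ∈ G ↔ (1 ≤ p.1 ∧ p.1 ≤ X) ∧ 1 ≤ p.2 ∧ p.2 ≤ X := by
    intro p
    simp [hGdef, Finset.mem_product, Finset.mem_Icc]
  set A : ℕ → Finset (ℕ × ℕ) := fun l => G.filter (fun p => p.1 ^ k + p.2 ^ k = l) with hAdef
  have hnum : ∀ l ∈ Finset.Icc 1 N, numRep 2 k l = (A l).card := by
    intro l hl
    rw [Finset.mem_Icc] at hl
    rw [numRep, ← Nat.card_eq_finsetCard]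
    apply Nat.card_congr
    refine ⟨fun v => ⟨(v.1 0, v.1 1), ?_⟩, fun p => ⟨![p.1.1, p.1.2], ?_⟩, ?_, ?_⟩
    · obtain ⟨h1, h2⟩ := v.2
      rw [Fin.sum_univ_two] at h2
      have e0 : v.1 0 ^ k ≤ N := by omega
      have e1 : v.1 1 ^ k ≤ N := by omega
      exact Finset.mem_filter.mpr
        ⟨(hGmem _).mpr ⟨⟨h1 0, hroot _ e0⟩, h1 1, hroot _ e1⟩, h2⟩
    · have hp : (↑p : ℕ × ℕ) ∈ A l := p.2
      simp only [hAdef, Finset.mem_filter, hGmem] at hp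
      refine ⟨fun i => ?_, ?_⟩
      · fin_cases i <;> simp [hp.1.1.1, hp.1.2.1]
      · rw [Fin.sum_univ_two]
        simpa using hp.2
    · intro v
      apply Subtype.ext
      funext i
      fin_cases i <;> simp
    · intro p
      apply Subtype.ext
      simp
  set T : Finset ((ℕ × ℕ) × ℕ × ℕ) :=
    (G ×ˢ G).filter (fun q => q.1.1 ^ k + q.1.2 ^ k = q.2.1 ^ k + q.2.2 ^ k) with hTdef
  have hsum1 : ∑ l ∈ Finset.Icc 1 N, (A l).card ^ 2 ≤ T.card := by
    have hdisj : ∀ l₁ ∈ Finset.Icc 1 N, ∀ l₂ ∈ Finset.Icc 1 N, l₁ ≠ l₂ →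
        Disjoint (A l₁ ×ˢ A l₁) (A l₂ ×ˢ A l₂) := by
      intro l₁ _ l₂ _ hne
      rw [Finset.disjoint_left]
      intro q hq hq'
      rw [Finset.mem_product] at hq hq'
      have h1 := Finset.mem_filter.mp hq.1
      have h2 := Finset.mem_filter.mp hq'.1
      exact hne (h1.2 ▸ h2.2)
    calc ∑ l ∈ Finset.Icc 1 N, (A l).card ^ 2
        = ∑ l ∈ Finset.Icc 1 N, (A l ×ˢ A l).card := by
          apply Finset.sum_congr rfl
          intro l _
          rw [Finset.card_product, sq]
      _ = ((Finset.Icc 1 N).biUnion (fun l => A l ×ˢ A l)).card :=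
          (Finset.card_biUnion hdisj).symm
      _ ≤ T.card := by
          apply Finset.card_le_card
          intro q hq
          rw [Finset.mem_biUnion] at hq
          obtain ⟨l, _, hq⟩ := hq
          rw [Finset.mem_product] at hq
          have h1 := Finset.mem_filter.mp hq.1
          have h2 := Finset.mem_filter.mp hq.2
          exact Finset.mem_filter.mpr ⟨Finset.mem_product.mpr ⟨h1.1, h2.1⟩, by rw [h1.2, h2.2]⟩
  set D : ℕ → Finset (ℕ × ℕ) :=
    fun m => G.filter (fun p => p.2 < p.1 ∧ p.1 ^ k - p.2 ^ k = m) with hDdef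
  have hTmem : ∀ q ∈ T, q.1 ∈ G ∧ q.2 ∈ G ∧ q.1.1 ^ k + q.1.2 ^ k = q.2.1 ^ k + q.2.2 ^ k := by
    intro q hq
    rw [hTdef, Finset.mem_filter, Finset.mem_product] at hq
    exact ⟨hq.1.1, hq.1.2, hq.2⟩
  have hoff : ∀ q ∈ T, q.2.1 < q.1.1 →
      ((q.1.1, q.2.1), (q.2.2, q.1.2)) ∈
        (Finset.Icc 1 N).biUnion (fun m => D m ×ˢ D m) := by
    intro q hq hlt
    obtain ⟨hg1, hg2, heq⟩ := hTmem q hq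
    rw [hGmem] at hg1 hg2
    have hppow : q.2.1 ^ k < q.1.1 ^ k := Nat.pow_lt_pow_left hlt hk0
    have hxk : q.1.1 ^ k ≤ N := le_trans (Nat.pow_le_pow_left hg1.1.2 k) hXk
    have h22 : q.1.2 ^ k < q.2.2 ^ k := by omega
    have h22' : q.1.2 < q.2.2 := by
      by_contra h
      exact absurd (Nat.pow_le_pow_left (not_lt.mp h) k) (by omega)
    rw [Finset.mem_biUnion]
    refine ⟨q.1.1 ^ k - q.2.1 ^ k,
      Finset.mem_Icc.mpr ⟨tsub_pos_of_lt hppow, le_trans (Nat.sub_le _ _) hxk⟩, ?_⟩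
    rw [Finset.mem_product]
    constructor
    · exact Finset.mem_filter.mpr
        ⟨(hGmem _).mpr ⟨⟨hg1.1.1, hg1.1.2⟩, hg2.1.1, hg2.1.2⟩, hlt, rfl⟩
    · exact Finset.mem_filter.mpr
        ⟨(hGmem _).mpr ⟨⟨hg2.2.1, hg2.2.2⟩, hg1.2.1, hg1.2.2⟩, h22',
          show q.2.2 ^ k - q.1.2 ^ k = q.1.1 ^ k - q.2.1 ^ k by omega⟩
  have hDdisj2 : ∀ m₁ ∈ Finset.Icc 1 N, ∀ m₂ ∈ Finset.Icc 1 N, m₁ ≠ m₂ →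
      Disjoint (D m₁ ×ˢ D m₁) (D m₂ ×ˢ D m₂) := by
    intro m₁ _ m₂ _ hne
    rw [Finset.disjoint_left]
    intro q hq hq'
    rw [Finset.mem_product] at hq hq'
    have h1 := (Finset.mem_filter.mp hq.1).2.2
    have h2 := (Finset.mem_filter.mp hq'.1).2.2
    exact hne (h1 ▸ h2)
  have hU : ((Finset.Icc 1 N).biUnion (fun m => D m ×ˢ D m)).card
      = ∑ m ∈ Finset.Icc 1 N, (D m).card ^ 2 := by
    rw [Finset.card_biUnion hDdisj2]
    exact Finset.sum_congr rfl fun m _ => by rw [Finset.card_product, sq]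
  have hT2 : (T.filter (fun q => q.2.1 < q.1.1)).card ≤ ∑ m ∈ Finset.Icc 1 N, (D m).card ^ 2 := by
    rw [← hU]
    apply Finset.card_le_card_of_injOn (fun q => ((q.1.1, q.2.1), (q.2.2, q.1.2)))
    · intro q hq
      have h := Finset.mem_filter.mp hq
      exact hoff q h.1 h.2
    · intro q hq q' hq' h
      obtain ⟨⟨a, b⟩, c, d⟩ := q
      obtain ⟨⟨a', b'⟩, c', d'⟩ := q'
      simp only [Prod.mk.injEq] at h ⊢
      tauto
  have hT3 : (T.filter (fun q => q.1.1 < q.2.1)).card ≤ ∑ m ∈ Finset.Icc 1 N, (D m).card ^ 2 := by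
    rw [← hU]
    apply Finset.card_le_card_of_injOn (fun q => ((q.2.1, q.1.1), (q.1.2, q.2.2)))
    · intro q hq
      have hmem := Finset.mem_filter.mp hq
      have hswap : (q.2, q.1) ∈ T := by
        obtain ⟨hg1, hg2, heq⟩ := hTmem q hmem.1
        exact Finset.mem_filter.mpr ⟨Finset.mem_product.mpr ⟨hg2, hg1⟩, heq.symm⟩
      exact hoff (q.2, q.1) hswap hmem.2
    · intro q hq q' hq' h
      obtain ⟨⟨a, b⟩, c, d⟩ := q
      obtain ⟨⟨a', b'⟩, c', d'⟩ := q'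
      simp only [Prod.mk.injEq] at h ⊢
      tauto
  have hT1 : (T.filter (fun q => q.1.1 = q.2.1)).card ≤ X * X := by
    rw [← hGcard]
    apply Finset.card_le_card_of_injOn (fun q => q.1)
    · intro q hq
      exact (hTmem q (Finset.mem_filter.mp hq).1).1
    · intro q hq q' hq' h
      replace h : q.1 = q'.1 := h
      have h1 := Finset.mem_filter.mp hq
      have h2 := Finset.mem_filter.mp hq'
      obtain ⟨_, _, heq⟩ := hTmem q h1.1
      obtain ⟨_, _, heq'⟩ := hTmem q' h2.1
      have e2 : q.2 = q.1 := by
        rw [h1.2] at heq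
        have hc : q.2.2 ^ k = q.1.2 ^ k := by omega
        exact Prod.ext h1.2.symm (Nat.pow_left_injective hk0 hc)
      have e2' : q'.2 = q'.1 := by
        rw [h2.2] at heq'
        have hc : q'.2.2 ^ k = q'.1.2 ^ k := by omega
        exact Prod.ext h2.2.symm (Nat.pow_left_injective hk0 hc)
      exact Prod.ext h (by rw [e2, e2', h])
  have hcover : T ⊆ (T.filter (fun q => q.1.1 = q.2.1)) ∪ (T.filter (fun q => q.2.1 < q.1.1))
      ∪ (T.filter (fun q => q.1.1 < q.2.1)) := by
    intro q hq
    rcases lt_trichotomy q.1.1 q.2.1 with h | h | h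
    · exact Finset.mem_union_right _ (Finset.mem_filter.mpr ⟨hq, h⟩)
    · exact Finset.mem_union_left _ (Finset.mem_union_left _ (Finset.mem_filter.mpr ⟨hq, h⟩))
    · exact Finset.mem_union_left _ (Finset.mem_union_right _ (Finset.mem_filter.mpr ⟨hq, h⟩))
  have hTsplit : T.card ≤ X * X + 2 * ∑ m ∈ Finset.Icc 1 N, (D m).card ^ 2 := by
    have h0 := Finset.card_le_card hcover
    have ha := Finset.card_union_le
      ((T.filter (fun q => q.1.1 = q.2.1)) ∪ (T.filter (fun q => q.2.1 < q.1.1)))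
      (T.filter (fun q => q.1.1 < q.2.1))
    have hb := Finset.card_union_le (T.filter (fun q => q.1.1 = q.2.1))
      (T.filter (fun q => q.2.1 < q.1.1))
    omega
  have hDcard : ∀ m ∈ Finset.Icc 1 N, ((D m).card : ℝ) ≤ Cd * (N:ℝ) ^ ε := by
    intro m hm
    rw [Finset.mem_Icc] at hm
    have h1 : (D m).card ≤ m.divisors.card := by
      apply Finset.card_le_card_of_injOn (fun p => p.1 - p.2)
      · intro p hp
        rw [hDdef, Finset.mem_coe, Finset.mem_filter] at hp
        refine Nat.mem_divisors.mpr ⟨?_, by omega⟩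
        show p.1 - p.2 ∣ m
        rw [← hp.2.2]
        exact Nat.sub_dvd_pow_sub_pow p.1 p.2 k
      · intro p hp p' hp' h
        replace h : p.1 - p.2 = p'.1 - p'.2 := h
        rw [Finset.mem_coe, Finset.mem_filter] at hp hp'
        obtain ⟨e1, e2⟩ := sub_inj k (by omega) hp.2.1 hp'.2.1 hp.2.2 hp'.2.2 h
        exact Prod.ext e1 e2
    calc ((D m).card : ℝ) ≤ (m.divisors.card : ℝ) := by exact_mod_cast h1
      _ ≤ Cd * (m:ℝ) ^ ε := hCd m hm.1
      _ ≤ Cd * (N:ℝ) ^ ε := by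
          apply mul_le_mul_of_nonneg_left _ hCd0
          exact Real.rpow_le_rpow (by positivity) (by exact_mod_cast hm.2) (le_of_lt hε)
  have hDsum : ∑ m ∈ Finset.Icc 1 N, (D m).card ≤ X * X := by
    have hdisj : ∀ m₁ ∈ Finset.Icc 1 N, ∀ m₂ ∈ Finset.Icc 1 N, m₁ ≠ m₂ →
        Disjoint (D m₁) (D m₂) := by
      intro m₁ _ m₂ _ hne
      rw [Finset.disjoint_left]
      intro p hp hp'
      rw [hDdef, Finset.mem_filter] at hp hp'
      exact hne (hp.2.2 ▸ hp'.2.2)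
    calc ∑ m ∈ Finset.Icc 1 N, (D m).card
        = ((Finset.Icc 1 N).biUnion D).card := (Finset.card_biUnion hdisj).symm
      _ ≤ G.card := Finset.card_le_card (by
          intro p hp
          rw [Finset.mem_biUnion] at hp
          obtain ⟨m, _, hp⟩ := hp
          exact Finset.mem_of_mem_filter p hp)
      _ = X * X := hGcard
  have hXX : (X:ℝ) * X ≤ (N:ℝ) ^ ((2:ℝ)/k) := by
    have h1 : (X:ℝ) * X ≤ (N:ℝ) ^ ((k:ℝ)⁻¹) * (N:ℝ) ^ ((k:ℝ)⁻¹) :=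
      mul_le_mul hXle hXle (by positivity) (by positivity)
    rwa [← Real.rpow_add (by linarith : (0:ℝ) < N),
      show (k:ℝ)⁻¹ + (k:ℝ)⁻¹ = (2:ℝ)/k by ring] at h1
  have hNε : (1:ℝ) ≤ (N:ℝ) ^ ε := by
    have h := Real.rpow_le_rpow_of_exponent_le hN1 (le_of_lt hε)
    rwa [Real.rpow_zero] at h
  have hDsum2 : ∑ m ∈ Finset.Icc 1 N, ((D m).card : ℝ) ^ 2 ≤ Cd * (N:ℝ) ^ ε * ((X:ℝ) * X) := by
    calc ∑ m ∈ Finset.Icc 1 N, ((D m).card : ℝ) ^ 2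
        ≤ ∑ m ∈ Finset.Icc 1 N, Cd * (N:ℝ) ^ ε * ((D m).card : ℝ) := by
          apply Finset.sum_le_sum
          intro m hm
          rw [sq]
          exact mul_le_mul_of_nonneg_right (hDcard m hm) (by positivity)
      _ = Cd * (N:ℝ) ^ ε * ∑ m ∈ Finset.Icc 1 N, ((D m).card : ℝ) := by rw [Finset.mul_sum]
      _ ≤ Cd * (N:ℝ) ^ ε * ((X:ℝ) * X) := by
          apply mul_le_mul_of_nonneg_left _ (by positivity)
          calc ∑ m ∈ Finset.Icc 1 N, ((D m).card : ℝ)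
              = ((∑ m ∈ Finset.Icc 1 N, (D m).card : ℕ) : ℝ) := by push_cast; rfl
            _ ≤ ((X * X : ℕ) : ℝ) := by exact_mod_cast hDsum
            _ = (X:ℝ) * X := by push_cast; ring
  have hXX0 : (0:ℝ) ≤ (X:ℝ) * X := by positivity
  have h2k0 : (0:ℝ) ≤ (N:ℝ) ^ ((2:ℝ)/k) := Real.rpow_nonneg hNR _
  calc ∑ l ∈ Finset.Icc 1 N, (numRep 2 k l : ℝ) ^ 2
      = ∑ l ∈ Finset.Icc 1 N, ((A l).card : ℝ) ^ 2 :=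
        Finset.sum_congr rfl (fun l hl => by rw [hnum l hl])
    _ = ((∑ l ∈ Finset.Icc 1 N, (A l).card ^ 2 : ℕ) : ℝ) := by push_cast; rfl
    _ ≤ ((X * X + 2 * ∑ m ∈ Finset.Icc 1 N, (D m).card ^ 2 : ℕ) : ℝ) := by
        exact_mod_cast le_trans hsum1 hTsplit
    _ = (X:ℝ) * X + 2 * ∑ m ∈ Finset.Icc 1 N, ((D m).card : ℝ) ^ 2 := by push_cast; ring
    _ ≤ (N:ℝ) ^ ((2:ℝ)/k) * (N:ℝ) ^ ε + 2 * (Cd * (N:ℝ) ^ ε * ((N:ℝ) ^ ((2:ℝ)/k))) := by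
        have hε0 : (0:ℝ) ≤ (N:ℝ) ^ ε := by positivity
        nlinarith [hXX, hNε, hDsum2, mul_nonneg hCd0 hε0]
    _ = (1 + 2 * Cd) * ((N:ℝ) ^ ((2:ℝ)/k) * (N:ℝ) ^ ε) := by ring
    _ = (1 + 2 * Cd) * (N:ℝ) ^ ((2:ℝ)/k + ε) := by
        rw [← Real.rpow_add (by linarith : (0:ℝ) < N)]
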